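/- Consider a customer attraction game and define ψ(t) = ln(max(e^{-1}, t)) and Ψ(S) = ∑_{j∈N} v_j · ψ(c(j,S)). Let i be an agent, S a strategy profile, S'_i ∈ 𝒮_i an alternative strategy, and set α = ln(1 + w_i) + 1. If U_i(S'_i, S_{-i}) > α · U_i(S), then Ψ(S'_i, S_{-i}) > Ψ(S). -/

import Mathlib

open Finset

/-- A customer attraction game: nodes `N` with integer values `≥ 1`, agents `A`
with integer weights `≥ 1`, and a nonempty finite strategy space (a finite set of
subsets of `N`) for each agent. -/
structure CAG (N A : Type*) [Fintype N] [Fintype A] where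
  v : N → ℕ
  v_pos : ∀ j, 1 ≤ v j
  w : A → ℕ
  w_pos : ∀ i, 1 ≤ w i
  strat : A → Finset (Finset N)
  strat_ne : ∀ i, (strat i).Nonempty

variable {N A : Type*} [Fintype N] [Fintype A] [DecidableEq N]

/-- The load `c(j,S)` of node `j`: total weight of agents attracting `j`. -/
def CAG.load (G : CAG N A) (S : A → Finset N) (j : N) : ℕ :=
  ∑ i : A, if j ∈ S i then G.w i else 0

/-- The utility `U_i(S) = ∑_{j ∈ S_i} v_j · w_i / c(j,S)`. -/
noncomputable def CAG.util (G : CAG N A) (S : A → Finset N) (i : A) : ℝ :=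
  ∑ j ∈ S i, (G.v j : ℝ) * (G.w i : ℝ) / (G.load S j : ℝ)

/-- A strategy profile: each agent plays a strategy from her strategy space. -/
def CAG.valid (G : CAG N A) (S : A → Finset N) : Prop :=
  ∀ i, S i ∈ G.strat i

/-- Pure Nash equilibrium. -/
def CAG.PNE [DecidableEq A] (G : CAG N A) (S : A → Finset N) : Prop :=
  G.valid S ∧ ∀ i, ∀ S' ∈ G.strat i, G.util (Function.update S i S') i ≤ G.util S i

/-- Social welfare. -/
noncomputable def CAG.sw (G : CAG N A) (S : A → Finset N) : ℝ :=
  ∑ i : A, G.util S i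

/-- The harmonic number `H_c = ∑_{k=1}^{c} 1/k`. -/
noncomputable def harm (c : ℕ) : ℝ := ∑ k ∈ Finset.range c, (1 : ℝ) / (k + 1)

/-- Rosenthal-type potential `Φ(S) = ∑_j v_j ∑_{k=1}^{c(j,S)} 1/k`. -/
noncomputable def CAG.pot (G : CAG N A) (S : A → Finset N) : ℝ :=
  ∑ j : N, (G.v j : ℝ) * harm (G.load S j)

/-- `ψ(t) = ln(max(e⁻¹, t))`. -/
noncomputable def psi (t : ℝ) : ℝ := Real.log (max (Real.exp (-1)) t)

/-- The potential `Ψ(S) = ∑_j v_j ψ(c(j,S))`. -/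
noncomputable def CAG.Psi (G : CAG N A) (S : A → Finset N) : ℝ :=
  ∑ j : N, (G.v j : ℝ) * psi (G.load S j : ℝ)

lemma psi_zero' : psi 0 = -1 := by
  have : max (Real.exp (-1)) 0 = Real.exp (-1) := max_eq_left (Real.exp_pos _).le
  simp [psi, this]

lemma psi_of_one_le {t : ℝ} (ht : 1 ≤ t) : psi t = Real.log t := by
  have h1 : Real.exp (-1) ≤ t := le_trans (by
    have := Real.exp_le_one_iff (x := -1)
    linarith [this.mpr (by norm_num : (-1:ℝ) ≤ 0)]) ht
  simp [psi, max_eq_right h1]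

/-- Gain lemma: for a natural load `c` and weight `w ≥ 1`,
`ψ(c+w) − ψ(c) ≥ w/(c+w)`. -/
lemma psi_gain (c : ℕ) {w : ℝ} (hw : 1 ≤ w) :
    w / ((c : ℝ) + w) ≤ psi ((c : ℝ) + w) - psi (c : ℝ) := by
  rcases Nat.eq_zero_or_pos c with hc | hc
  · subst hc
    simp only [Nat.cast_zero, zero_add, psi_zero', psi_of_one_le hw]
    have hw0 : (0:ℝ) < w := by linarith
    have : w / w = 1 := div_self hw0.ne'
    have hlog : 0 ≤ Real.log w := Real.log_nonneg hw
    rw [this]; linarith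
  · have hc1 : (1:ℝ) ≤ (c : ℝ) := by exact_mod_cast hc
    have h0 : (0:ℝ) < (c : ℝ) := by linarith
    have h1 : (0:ℝ) < (c : ℝ) + w := by linarith
    rw [psi_of_one_le (by linarith), psi_of_one_le hc1]
    have hk := Real.log_le_sub_one_of_pos (show (0:ℝ) < (c:ℝ) / ((c:ℝ) + w) by positivity)
    rw [Real.log_div h0.ne' h1.ne'] at hk
    have he : (c:ℝ) / ((c:ℝ) + w) - 1 = -(w / ((c:ℝ) + w)) := by field_simp; ring
    rw [he] at hk
    linarith

/-- Loss lemma: for a natural load `d` and weight `w ≥ 1`,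
`ψ(d+w) − ψ(d) ≤ (log(1+w)+1) · w/(d+w)`. -/
lemma psi_loss (d : ℕ) {w : ℝ} (hw : 1 ≤ w) :
    psi ((d : ℝ) + w) - psi (d : ℝ) ≤ (Real.log (1 + w) + 1) * (w / ((d : ℝ) + w)) := by
  have hw0 : (0:ℝ) < w := by linarith
  rcases Nat.eq_zero_or_pos d with hd | hd
  · subst hd
    simp only [Nat.cast_zero, zero_add, psi_zero', psi_of_one_le hw]
    rw [div_self hw0.ne']
    have : Real.log w ≤ Real.log (1 + w) :=
      Real.log_le_log (by linarith) (by linarith)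
    linarith
  · have hd1 : (1:ℝ) ≤ (d : ℝ) := by exact_mod_cast hd
    have h0 : (0:ℝ) < (d : ℝ) := by linarith
    have h1 : (0:ℝ) < (d : ℝ) + w := by linarith
    rw [psi_of_one_le (by linarith), psi_of_one_le hd1]
    set L : ℝ := Real.log ((d:ℝ) + w) - Real.log (d:ℝ) with hL
    have hLrw : L = Real.log (((d:ℝ) + w) / (d:ℝ)) := by
      rw [Real.log_div h1.ne' h0.ne']
    -- key1 : L ≤ w / d
    have key1 : L ≤ w / (d:ℝ) := by
      rw [hLrw]
      have := Real.log_le_sub_one_of_pos (show (0:ℝ) < ((d:ℝ) + w) / (d:ℝ) by positivity)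
      have he : ((d:ℝ) + w) / (d:ℝ) - 1 = w / (d:ℝ) := by field_simp; ring
      linarith
    -- key2 : L ≤ log (1 + w)
    have key2 : L ≤ Real.log (1 + w) := by
      rw [hLrw]
      apply Real.log_le_log (by positivity)
      rw [div_le_iff₀ h0]
      nlinarith
    -- combine : L * (d + w) ≤ w * log(1+w) + w
    have hdl : (d:ℝ) * L ≤ w := by
      have := mul_le_mul_of_nonneg_left key1 h0.le
      rw [mul_div_cancel₀ _ h0.ne'] at this
      linarith
    have hwl : w * L ≤ w * Real.log (1 + w) :=
      mul_le_mul_of_nonneg_left key2 hw0.le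
    have hcomb : L * ((d:ℝ) + w) ≤ w * Real.log (1 + w) + w := by nlinarith
    rw [show (Real.log (1 + w) + 1) * (w / ((d:ℝ) + w))
        = (w * Real.log (1 + w) + w) / ((d:ℝ) + w) by ring]
    rw [le_div_iff₀ h1]
    linarith

lemma CAG.load_cast (G : CAG N A) (S : A → Finset N) (j : N) :
    (G.load S j : ℝ) = ∑ k : A, if j ∈ S k then (G.w k : ℝ) else 0 := by
  unfold CAG.load
  push_cast
  rfl

lemma CAG.load_update (G : CAG N A) [DecidableEq A] (S : A → Finset N) (i : A)
    (S' : Finset N) (j : N) :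
    (G.load (Function.update S i S') j : ℝ)
      = (G.load S j : ℝ) - (if j ∈ S i then (G.w i : ℝ) else 0)
        + (if j ∈ S' then (G.w i : ℝ) else 0) := by
  rw [CAG.load_cast, CAG.load_cast]
  rw [← Finset.sum_erase_add _ _ (Finset.mem_univ i),
      ← Finset.sum_erase_add Finset.univ (fun k => if j ∈ S k then (G.w k : ℝ) else 0)
        (Finset.mem_univ i)]
  have hcong : ∑ k ∈ Finset.univ.erase i,
      (if j ∈ Function.update S i S' k then (G.w k : ℝ) else 0)
      = ∑ k ∈ Finset.univ.erase i, (if j ∈ S k then (G.w k : ℝ) else 0) := by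
    apply Finset.sum_congr rfl
    intro k hk
    rw [Function.update_of_ne (Finset.ne_of_mem_erase hk)]
  rw [hcong, Function.update_self]
  ring

lemma CAG.load_ge (G : CAG N A) (S : A → Finset N) {i : A} {j : N} (hj : j ∈ S i) :
    G.w i ≤ G.load S j := by
  unfold CAG.load
  have := Finset.single_le_sum (f := fun k => if j ∈ S k then G.w k else 0)
    (fun k _ => Nat.zero_le _) (Finset.mem_univ i)
  simpa [hj] using this

lemma CAG.util_as_univ_sum (G : CAG N A) (S : A → Finset N) (i : A) :
    G.util S i = ∑ j : N, if j ∈ S i then (G.v j : ℝ) * (G.w i : ℝ) / (G.load S j : ℝ) else 0 := by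
  rw [CAG.util, Finset.sum_ite_mem, Finset.univ_inter]

/-- If agent `i` deviates and improves her utility by more than the
factor `α = ln(1 + w_i) + 1`, then the potential `Ψ` strictly increases. -/
theorem Psi_increases_on_alpha_improving_deviation [DecidableEq A]
    (G : CAG N A) (S : A → Finset N) (hS : G.valid S)
    (i : A) (S' : Finset N) (hS' : S' ∈ G.strat i)
    (h : (Real.log (1 + (G.w i : ℝ)) + 1) * G.util S i
          < G.util (Function.update S i S') i) :
    G.Psi S < G.Psi (Function.update S i S') := by
  classical
  set T := Function.update S i S' with hT
  set w : ℝ := (G.w i : ℝ) with hwdef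
  have hw : 1 ≤ w := by rw [hwdef]; exact_mod_cast G.w_pos i
  have hw0 : (0:ℝ) < w := by linarith
  set α : ℝ := Real.log (1 + w) + 1 with hα
  have hα1 : 1 ≤ α := by
    have : 0 ≤ Real.log (1 + w) := Real.log_nonneg (by linarith)
    rw [hα]; linarith
  have hTi : T i = S' := Function.update_self i S' S
  -- key inequality : util T i - α * util S i ≤ Psi T - Psi S
  have key : G.util T i - α * G.util S i ≤ G.Psi T - G.Psi S := by
    rw [CAG.util_as_univ_sum G T i, CAG.util_as_univ_sum G S i, hTi, CAG.Psi, CAG.Psi,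
        ← Finset.sum_sub_distrib, Finset.mul_sum, ← Finset.sum_sub_distrib]
    apply Finset.sum_le_sum
    intro j _
    have hv : (1:ℝ) ≤ (G.v j : ℝ) := by exact_mod_cast G.v_pos j
    have hv0 : (0:ℝ) < (G.v j : ℝ) := by linarith
    have hload := G.load_update S i S' j
    rw [← hT] at hload
    by_cases hS' : j ∈ S'
    · by_cases hSi : j ∈ S i
      · -- shared node : loads equal
        have hceq : (G.load T j : ℝ) = (G.load S j : ℝ) := by
          rw [hload]; simp [hS', hSi]
        have hcpos : (0:ℝ) < (G.load S j : ℝ) := by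
          have h2 := G.load_ge S hSi
          have : (w : ℝ) ≤ (G.load S j : ℝ) := by rw [hwdef]; exact_mod_cast h2
          linarith
        rw [if_pos hS', if_pos hSi, hceq]
        have hterm : (0:ℝ) ≤ (G.v j : ℝ) * w / (G.load S j : ℝ) := by positivity
        nlinarith
      · -- gain node : load T j = load S j + w
        have hceq : (G.load T j : ℝ) = (G.load S j : ℝ) + w := by
          rw [hload]; simp [hS', hSi, hwdef]
        rw [if_pos hS', if_neg hSi, hceq]
        have hgain := psi_gain (G.load S j) hw
        have h1 : (0:ℝ) < (G.load S j : ℝ) + w := by positivity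
        have : (G.v j : ℝ) * (w / ((G.load S j : ℝ) + w))
            ≤ (G.v j : ℝ) * (psi ((G.load S j : ℝ) + w) - psi (G.load S j : ℝ)) :=
          mul_le_mul_of_nonneg_left hgain hv0.le
        have heq : (G.v j : ℝ) * w / ((G.load S j : ℝ) + w)
            = (G.v j : ℝ) * (w / ((G.load S j : ℝ) + w)) := by ring
        rw [heq]
        linarith
    · by_cases hSi : j ∈ S i
      · -- loss node : load S j = load T j + w
        have hceq : (G.load S j : ℝ) = (G.load T j : ℝ) + w := by
          rw [hload]; simp [hS', hSi, hwdef]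
        rw [if_neg hS', if_pos hSi]
        have hloss := psi_loss (G.load T j) hw
        have : (G.v j : ℝ) * (psi ((G.load T j : ℝ) + w) - psi (G.load T j : ℝ))
            ≤ (G.v j : ℝ) * (α * (w / ((G.load T j : ℝ) + w))) :=
          mul_le_mul_of_nonneg_left hloss hv0.le
        rw [hceq]
        have heq : α * ((G.v j : ℝ) * w / ((G.load T j : ℝ) + w))
            = (G.v j : ℝ) * (α * (w / ((G.load T j : ℝ) + w))) := by ring
        rw [heq]
        linarith
      · -- untouched node
        have hceq : (G.load T j : ℝ) = (G.load S j : ℝ) := by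
          rw [hload]; simp [hS', hSi]
        rw [if_neg hS', if_neg hSi, hceq]
        simp
  have hh : α * G.util S i < G.util T i := h
  linarith
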